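/- Let n ≥ 1 and let p ∈ [1, ∞] with p ≠ 2. Then the group of all isometries of ℝⁿ equipped with the ℓᵖ norm (i.e., surjective self-isometries of the space ℓᵖ(Fin n, ℝ)) is fixating. -/

import Mathlib

open Real Set

set_option linter.unusedSectionVars false
set_option maxHeartbeats 1000000


lemma real_subadd_rpow {q x y : ℝ} (hq0 : 0 ≤ q) (hq1 : q ≤ 1) (hx : 0 ≤ x) (hy : 0 ≤ y) :
    (x + y) ^ q ≤ x ^ q + y ^ q := by
  have h := NNReal.rpow_add_le_add_rpow (Real.toNNReal x) (Real.toNNReal y) hq0 hq1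
  rw [← Real.toNNReal_add hx hy] at h
  have h' := (NNReal.coe_le_coe).2 h
  rw [NNReal.coe_add, NNReal.coe_rpow, NNReal.coe_rpow, NNReal.coe_rpow,
    Real.coe_toNNReal _ hx, Real.coe_toNNReal _ hy, Real.coe_toNNReal _ (by positivity)] at h'
  exact h'

lemma real_superadd_rpow {q x y : ℝ} (hq1 : 1 ≤ q) (hx : 0 ≤ x) (hy : 0 ≤ y) :
    x ^ q + y ^ q ≤ (x + y) ^ q := by
  have h := NNReal.add_rpow_le_rpow_add (Real.toNNReal x) (Real.toNNReal y) hq1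
  rw [← Real.toNNReal_add hx hy] at h
  have h' := (NNReal.coe_le_coe).2 h
  rw [NNReal.coe_add, NNReal.coe_rpow, NNReal.coe_rpow, NNReal.coe_rpow,
    Real.coe_toNNReal _ hx, Real.coe_toNNReal _ hy, Real.coe_toNNReal _ (by positivity)] at h'
  exact h'

lemma core_hasDeriv {r : ℝ} (hr1 : 1 ≤ r) {t : ℝ} (h0 : 0 < t) (h1 : t < 1) :
    HasDerivAt (fun t : ℝ => 2 + 2*t^r - (1+t)^r - (1-t)^r)
      (r * (2*t^(r-1) + (1-t)^(r-1) - (1+t)^(r-1))) t := by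
  have ht : HasDerivAt (fun t : ℝ => t ^ r) (r * t^(r-1)) t :=
    Real.hasDerivAt_rpow_const (Or.inl h0.ne')
  have h1t : HasDerivAt (fun t : ℝ => (1+t) ^ r) (1 * r * (1+t)^(r-1)) t :=
    ((hasDerivAt_id t).const_add 1).rpow_const (Or.inl (by simp only [id_eq]; intro h; linarith))
  have h2t : HasDerivAt (fun t : ℝ => (1-t) ^ r) ((-1) * r * (1-t)^(r-1)) t :=
    ((hasDerivAt_id t).const_sub 1).rpow_const (Or.inl (by simp only [id_eq]; intro h; rw [sub_eq_zero] at h; linarith))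
  have H := (((ht.const_mul 2).const_add 2).sub h1t).sub h2t
  exact H.congr_deriv (by ring)

lemma core_cont {r : ℝ} (hr1 : 1 ≤ r) :
    Continuous (fun t : ℝ => 2 + 2*t^r - (1+t)^r - (1-t)^r) := by
  have h0 : (0:ℝ) ≤ r := by linarith
  have c1 : Continuous fun t : ℝ => t ^ r := continuous_id.rpow_const (fun x => Or.inr h0)
  have c2 : Continuous fun t : ℝ => (1+t) ^ r :=
    (continuous_const.add continuous_id).rpow_const (fun x => Or.inr h0)
  have c3 : Continuous fun t : ℝ => (1-t) ^ r :=
    (continuous_const.sub continuous_id).rpow_const (fun x => Or.inr h0)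
  exact ((continuous_const.add (continuous_const.mul c1)).sub c2).sub c3

lemma core_lt {r : ℝ} (hr1 : 1 ≤ r) (hr2 : r < 2) {t : ℝ} (ht0 : 0 < t) (ht1 : t ≤ 1) :
    (1+t)^r + (1-t)^r < 2 + 2*t^r := by
  set F : ℝ → ℝ := fun t : ℝ => 2 + 2*t^r - (1+t)^r - (1-t)^r with hF
  have hmono : StrictMonoOn F (Icc (0:ℝ) 1) := by
    apply strictMonoOn_of_deriv_pos (convex_Icc 0 1) ((core_cont hr1).continuousOn)
    intro x hx
    rw [interior_Icc] at hx
    obtain ⟨hx1, hx2⟩ := hx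
    rw [(core_hasDeriv hr1 hx1 hx2).deriv]
    have hq0 : 0 ≤ r - 1 := by linarith
    have hq1 : r - 1 < 1 := by linarith
    have key : (1+x)^(r-1) < 2*x^(r-1) + (1-x)^(r-1) := by
      rcases eq_or_lt_of_le hq0 with hq|hq
      · rw [← hq]
        rw [Real.rpow_zero, Real.rpow_zero, Real.rpow_zero]
        norm_num
      · have hsub : (1+x)^(r-1) ≤ (1-x)^(r-1) + (2*x)^(r-1) := by
          have : (1:ℝ) + x = (1-x) + 2*x := by ring
          rw [this]
          exact real_subadd_rpow hq0 (by linarith) (by linarith) (by linarith)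
        have h2x : (2*x)^(r-1) < 2 * x^(r-1) := by
          rw [Real.mul_rpow (by norm_num) hx1.le]
          have : (2:ℝ)^(r-1) < 2 := by
            calc (2:ℝ)^(r-1) < 2^(1:ℝ) := Real.rpow_lt_rpow_of_exponent_lt one_lt_two (by linarith)
            _ = 2 := Real.rpow_one 2
          exact mul_lt_mul_of_pos_right this (Real.rpow_pos_of_pos hx1 _)
        linarith
    have hrpos : 0 < r := by linarith
    nlinarith [key, hrpos]
  have h0m : (0:ℝ) ∈ Icc (0:ℝ) 1 := by constructor <;> norm_num
  have htm : t ∈ Icc (0:ℝ) 1 := ⟨ht0.le, ht1⟩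
  have := hmono h0m htm ht0
  have hF0 : F 0 = 0 := by
    simp only [hF]
    rw [Real.zero_rpow (by linarith : r ≠ 0)]
    norm_num
  rw [hF0] at this
  simp only [hF] at this
  linarith

lemma core_gt {r : ℝ} (hr2 : 2 < r) {t : ℝ} (ht0 : 0 < t) (ht1 : t ≤ 1) :
    2 + 2*t^r < (1+t)^r + (1-t)^r := by
  have hr1 : 1 ≤ r := by linarith
  set F : ℝ → ℝ := fun t : ℝ => 2 + 2*t^r - (1+t)^r - (1-t)^r with hF
  have hmono : StrictAntiOn F (Icc (0:ℝ) 1) := by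
    apply strictAntiOn_of_deriv_neg (convex_Icc 0 1) ((core_cont hr1).continuousOn)
    intro x hx
    rw [interior_Icc] at hx
    obtain ⟨hx1, hx2⟩ := hx
    rw [(core_hasDeriv hr1 hx1 hx2).deriv]
    have hq1 : 1 < r - 1 := by linarith
    have key : 2*x^(r-1) + (1-x)^(r-1) < (1+x)^(r-1) := by
      have hsup : (1-x)^(r-1) + (2*x)^(r-1) ≤ (1+x)^(r-1) := by
        have h : (1:ℝ) + x = (1-x) + 2*x := by ring
        rw [h]
        exact real_superadd_rpow hq1.le (by linarith) (by linarith)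
      have h2x : 2 * x^(r-1) < (2*x)^(r-1) := by
        rw [Real.mul_rpow (by norm_num) hx1.le]
        have : (2:ℝ) < 2^(r-1) := by
          calc (2:ℝ) = 2^(1:ℝ) := (Real.rpow_one 2).symm
          _ < 2^(r-1) := Real.rpow_lt_rpow_of_exponent_lt one_lt_two hq1
        exact mul_lt_mul_of_pos_right this (Real.rpow_pos_of_pos hx1 _)
      linarith
    have hrpos : 0 < r := by linarith
    nlinarith [key, hrpos]
  have h0m : (0:ℝ) ∈ Icc (0:ℝ) 1 := by constructor <;> norm_num
  have htm : t ∈ Icc (0:ℝ) 1 := ⟨ht0.le, ht1⟩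
  have := hmono h0m htm ht0
  have hF0 : F 0 = 0 := by
    simp only [hF]
    rw [Real.zero_rpow (by linarith : r ≠ 0)]
    norm_num
  rw [hF0] at this
  simp only [hF] at this
  linarith

lemma abs_pair (r : ℝ) (a b : ℝ) :
    |a+b| ^ r + |a-b| ^ r = (|a|+|b|) ^ r + |(|a|-|b|)| ^ r := by
  rcases le_total 0 a with ha|ha <;> rcases le_total 0 b with hb|hb
  · rw [abs_of_nonneg ha, abs_of_nonneg hb, abs_of_nonneg (add_nonneg ha hb)]
  · rw [abs_of_nonneg ha, abs_of_nonpos hb]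
    have e1 : a + -b = a - b := by ring
    have e2 : |a - -b| = |a + b| := by ring_nf
    rw [e1, e2, abs_of_nonneg (show (0:ℝ) ≤ a - b by linarith), add_comm]
  · rw [abs_of_nonpos ha, abs_of_nonneg hb]
    have e1 : -a + b = -(a - b) := by ring
    have e2 : |-a - b| = |a + b| := by rw [show -a - b = -(a+b) by ring, abs_neg]
    rw [e1, e2, abs_of_nonpos (show a - b ≤ 0 by linarith), add_comm]
  · rw [abs_of_nonpos ha, abs_of_nonpos hb]
    have e1 : -a + -b = -(a + b) := by ring
    have e2 : |-a - -b| = |a - b| := by rw [show -a - -b = -(a-b) by ring, abs_neg]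
    rw [e1, e2, abs_of_nonpos (show a + b ≤ 0 by linarith)]

lemma aux_lt {r : ℝ} (hr1 : 1 ≤ r) (hr2 : r < 2) {A B : ℝ} (hB : 0 < B) (hBA : B ≤ A) :
    (A+B)^r + (A-B)^r < 2*A^r + 2*B^r := by
  have hA : 0 < A := lt_of_lt_of_le hB hBA
  have ht0 : 0 < B/A := div_pos hB hA
  have ht1 : B/A ≤ 1 := (div_le_one hA).2 hBA
  have h := core_lt hr1 hr2 ht0 ht1
  have hmul := mul_lt_mul_of_pos_left h (Real.rpow_pos_of_pos hA r)
  have e1 : A^r * (1+B/A)^r = (A+B)^r := by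
    rw [← Real.mul_rpow hA.le (by positivity)]
    congr 1; field_simp
  have e2 : A^r * (1-B/A)^r = (A-B)^r := by
    rw [← Real.mul_rpow hA.le (by linarith : (0:ℝ) ≤ 1 - B/A)]
    congr 1; field_simp
  have e3 : A^r * (B/A)^r = B^r := by
    rw [← Real.mul_rpow hA.le ht0.le]; congr 1; field_simp
  have expand : A^r * ((1+B/A)^r + (1-B/A)^r) = (A+B)^r + (A-B)^r := by
    rw [mul_add, e1, e2]
  have expand2 : A^r * (2 + 2*(B/A)^r) = 2*A^r + 2*(A^r * (B/A)^r) := by ring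
  rw [e3] at expand2
  linarith [hmul]

lemma aux_gt {r : ℝ} (hr2 : 2 < r) {A B : ℝ} (hB : 0 < B) (hBA : B ≤ A) :
    2*A^r + 2*B^r < (A+B)^r + (A-B)^r := by
  have hA : 0 < A := lt_of_lt_of_le hB hBA
  have ht0 : 0 < B/A := div_pos hB hA
  have ht1 : B/A ≤ 1 := (div_le_one hA).2 hBA
  have h := core_gt hr2 ht0 ht1
  have hmul := mul_lt_mul_of_pos_left h (Real.rpow_pos_of_pos hA r)
  have e1 : A^r * (1+B/A)^r = (A+B)^r := by
    rw [← Real.mul_rpow hA.le (by positivity)]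
    congr 1; field_simp
  have e2 : A^r * (1-B/A)^r = (A-B)^r := by
    rw [← Real.mul_rpow hA.le (by linarith : (0:ℝ) ≤ 1 - B/A)]
    congr 1; field_simp
  have e3 : A^r * (B/A)^r = B^r := by
    rw [← Real.mul_rpow hA.le ht0.le]; congr 1; field_simp
  have expand : A^r * ((1+B/A)^r + (1-B/A)^r) = (A+B)^r + (A-B)^r := by
    rw [mul_add, e1, e2]
  have expand2 : A^r * (2 + 2*(B/A)^r) = 2*A^r + 2*(A^r * (B/A)^r) := by ring
  rw [e3] at expand2
  linarith [hmul]

lemma scalar_lt {r : ℝ} (hr1 : 1 ≤ r) (hr2 : r < 2) {a b : ℝ} (hab : a*b ≠ 0) :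
    |a+b|^r + |a-b|^r < 2*|a|^r + 2*|b|^r := by
  rw [abs_pair]
  have ha : 0 < |a| := abs_pos.2 fun h => hab (by rw [h, zero_mul])
  have hb : 0 < |b| := abs_pos.2 fun h => hab (by rw [h, mul_zero])
  rcases le_total |b| |a| with h|h
  · rw [abs_of_nonneg (by linarith : (0:ℝ) ≤ |a| - |b|)]
    exact aux_lt hr1 hr2 hb h
  · rw [abs_of_nonpos (by linarith : |a| - |b| ≤ (0:ℝ)), neg_sub, add_comm (|a|) (|b|)]
    have := aux_lt hr1 hr2 ha h
    linarith

lemma scalar_gt {r : ℝ} (hr2 : 2 < r) {a b : ℝ} (hab : a*b ≠ 0) :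
    2*|a|^r + 2*|b|^r < |a+b|^r + |a-b|^r := by
  rw [abs_pair]
  have ha : 0 < |a| := abs_pos.2 fun h => hab (by rw [h, zero_mul])
  have hb : 0 < |b| := abs_pos.2 fun h => hab (by rw [h, mul_zero])
  rcases le_total |b| |a| with h|h
  · rw [abs_of_nonneg (by linarith : (0:ℝ) ≤ |a| - |b|)]
    exact aux_gt hr2 hb h
  · rw [abs_of_nonpos (by linarith : |a| - |b| ≤ (0:ℝ)), neg_sub, add_comm (|a|) (|b|)]
    have := aux_gt hr2 ha h
    linarith

lemma scalar_eq {r : ℝ} (hr0 : r ≠ 0) {a b : ℝ} (hab : a*b = 0) :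
    |a+b|^r + |a-b|^r = 2*|a|^r + 2*|b|^r := by
  rcases mul_eq_zero.1 hab with h|h <;> subst h
  · rw [zero_add, zero_sub, abs_neg, abs_zero, Real.zero_rpow hr0]; ring
  · rw [add_zero, sub_zero, abs_zero, Real.zero_rpow hr0]; ring

lemma scalar_le {r : ℝ} (hr1 : 1 ≤ r) (hr2 : r < 2) (a b : ℝ) :
    |a+b|^r + |a-b|^r ≤ 2*|a|^r + 2*|b|^r := by
  by_cases hab : a*b = 0
  · exact (scalar_eq (by linarith) hab).le
  · exact (scalar_lt hr1 hr2 hab).le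

lemma scalar_ge {r : ℝ} (hr2 : 2 < r) (a b : ℝ) :
    2*|a|^r + 2*|b|^r ≤ |a+b|^r + |a-b|^r := by
  by_cases hab : a*b = 0
  · exact (scalar_eq (by intro h; rw [h] at hr2; norm_num at hr2) hab).ge
  · exact (scalar_gt hr2 hab).le

lemma sum_disj_iff {n : ℕ} {r : ℝ} (hr1 : 1 ≤ r) (hrne : r ≠ 2) (x y : Fin n → ℝ) :
    ((∑ i, (|x i + y i|^r + |x i - y i|^r)) = ∑ i, (2*|x i|^r + 2*|y i|^r)) ↔
      ∀ i, x i * y i = 0 := by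
  have hr0 : r ≠ 0 := by intro h; rw [h] at hr1; norm_num at hr1
  constructor
  · intro hsum i
    by_contra hne
    rcases lt_or_gt_of_ne hrne with h2|h2
    · have hlt : (∑ i, (|x i + y i|^r + |x i - y i|^r)) < ∑ i, (2*|x i|^r + 2*|y i|^r) :=
        Finset.sum_lt_sum (fun j _ => scalar_le hr1 h2 _ _) ⟨i, Finset.mem_univ i, scalar_lt hr1 h2 hne⟩
      exact absurd hsum hlt.ne
    · have hlt : (∑ i, (2*|x i|^r + 2*|y i|^r)) < ∑ i, (|x i + y i|^r + |x i - y i|^r) :=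
        Finset.sum_lt_sum (fun j _ => scalar_ge h2 _ _) ⟨i, Finset.mem_univ i, scalar_gt h2 hne⟩
      exact absurd hsum hlt.ne'
  · intro h
    exact Finset.sum_congr rfl fun i _ => scalar_eq hr0 (h i)
section Main
variable (n : ℕ) (p : ENNReal) [Fact (1 ≤ p)]

local notation "E" => PiLp p (fun _ : Fin n => ℝ)




noncomputable def ee (i : Fin n) : E := (WithLp.equiv p _).symm (Pi.single i 1)

lemma ee_apply (i k : Fin n) : ee n p i k = if k = i then 1 else 0 := by
  simp [ee, Pi.single_apply]

lemma norm_ee (i : Fin n) : ‖ee n p i‖ = 1 := by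
  simp [ee, PiLp.norm_toLp_single]

variable {n p} in
lemma ext_E {x y : E} (h : ∀ k, x k = y k) : x = y := (WithLp.ext_iff p).2 (funext h)

lemma ee_ne_zero (i : Fin n) : ee n p i ≠ 0 := by
  intro h
  have h2 := norm_ee n p i
  rw [h, norm_zero] at h2
  norm_num at h2

variable {n p} in
lemma N_eq_norm (hpt : p ≠ ⊤) (x : E) : (∑ i, |x i| ^ p.toReal) = ‖x‖ ^ p.toReal := by
  have hp1 : (1 : ENNReal) ≤ p := Fact.out
  have hr : 0 < p.toReal := ENNReal.toReal_pos (by intro h; rw [h] at hp1; simp at hp1) hpt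
  rw [PiLp.norm_eq_sum hr]
  rw [← Real.rpow_mul (by positivity), one_div, inv_mul_cancel₀ hr.ne', Real.rpow_one]
  simp [Real.norm_eq_abs]

variable {n p} in
lemma signed_perm (hpt : p ≠ ⊤) (hp2 : p ≠ 2) (T : E ≃ₗᵢ[ℝ] E) :
    ∀ i : Fin n, ∃ js : Fin n × Bool, T (ee n p i) = (if js.2 then (1:ℝ) else -1) • ee n p js.1 := by
  classical
  have hp1 : (1 : ENNReal) ≤ p := Fact.out
  set r := p.toReal with hrdef
  have hr1 : (1:ℝ) ≤ r := by
    have := ENNReal.toReal_mono hpt hp1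
    simpa using this
  have hrne : r ≠ 2 := by
    intro h
    exact hp2 ((ENNReal.toReal_eq_toReal_iff' hpt (by norm_num)).1 (by simpa using h))
  have NT : ∀ z : E, (∑ k, |T z k| ^ r) = ∑ k, |z k| ^ r := by
    intro z
    rw [N_eq_norm hpt, N_eq_norm hpt, T.norm_map]
  have disj : ∀ i j : Fin n, i ≠ j → ∀ k, T (ee n p i) k * T (ee n p j) k = 0 := by
    intro i j hij
    have base : ∀ k, (ee n p i) k * (ee n p j) k = 0 := by
      intro k
      by_cases hki : k = i
      · subst hki
        rw [ee_apply, ee_apply, if_neg hij]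
        exact mul_zero _
      · rw [ee_apply, ee_apply, if_neg hki]
        exact zero_mul _
    have hsum := (sum_disj_iff hr1 hrne (fun k => (ee n p i) k) (fun k => (ee n p j) k)).2 base
    refine (sum_disj_iff hr1 hrne (fun k => T (ee n p i) k) (fun k => T (ee n p j) k)).1 ?_
    simp only [← PiLp.add_apply, ← PiLp.sub_apply]
    simp only [← map_add, ← map_sub]
    rw [Finset.sum_add_distrib, Finset.sum_add_distrib, NT, NT,
      ← Finset.mul_sum, ← Finset.mul_sum, NT, NT]
    simp only [PiLp.add_apply, PiLp.sub_apply]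
    rw [Finset.sum_add_distrib, Finset.sum_add_distrib, ← Finset.mul_sum, ← Finset.mul_sum] at hsum
    linarith [hsum]
  -- each T (ee i) is nonzero, pick a nonzero coordinate
  have hTnz : ∀ i : Fin n, T (ee n p i) ≠ 0 := by
    intro i h
    exact ee_ne_zero n p i (by
      have := congrArg T.symm h
      rwa [T.symm_apply_apply, map_zero] at this)
  have hex : ∀ i : Fin n, ∃ k, T (ee n p i) k ≠ 0 := by
    intro i
    by_contra h
    push_neg at h
    exact hTnz i (ext_E fun k => h k)
  choose jmap hjmap using hex
  have hinj : Function.Injective jmap := by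
    intro i i' h
    by_contra hne
    have := disj i i' hne (jmap i)
    rw [h] at this
    exact (mul_ne_zero (h ▸ hjmap i) (hjmap i')) this
  have hsurj : Function.Surjective jmap := Finite.surjective_of_injective hinj
  -- support of T (ee i) is {jmap i}
  have hsupp : ∀ i k, k ≠ jmap i → T (ee n p i) k = 0 := by
    intro i k hk
    obtain ⟨i', hi'⟩ := hsurj k
    have hii' : i ≠ i' := by
      intro h; rw [h, hi'] at hk; exact hk rfl
    have hd := disj i i' hii' k
    have : T (ee n p i') k ≠ 0 := hi' ▸ hjmap i'
    rcases mul_eq_zero.1 hd with h|h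
    · exact h
    · exact absurd h this
  intro i
  set c := T (ee n p i) (jmap i) with hc
  have hTe : T (ee n p i) = c • ee n p (jmap i) := by
    apply ext_E
    intro k
    rw [PiLp.smul_apply, ee_apply]
    by_cases hk : k = jmap i
    · rw [if_pos hk, smul_eq_mul, mul_one, hk]
    · rw [if_neg hk, smul_eq_mul, mul_zero]
      exact hsupp i k hk
  have hcabs : |c| = 1 := by
    have h1 : ‖T (ee n p i)‖ = 1 := by rw [T.norm_map, norm_ee]
    rw [hTe, norm_smul, Real.norm_eq_abs, norm_ee, mul_one] at h1
    exact h1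
  rcases (abs_eq (by norm_num : (0:ℝ) ≤ 1)).1 hcabs with h|h
  · exact ⟨(jmap i, true), by rw [hTe, h]; norm_num⟩
  · exact ⟨(jmap i, false), by rw [hTe, h]; norm_num⟩




noncomputable def sgn (v : Fin n → Bool) : E :=
  (WithLp.equiv p _).symm (fun i => if v i then 1 else -1)

lemma sgn_apply (v : Fin n → Bool) (i : Fin n) : sgn n p v i = if v i then 1 else -1 := rfl

variable {n p} in
lemma norm_top_le (hpt : p = ⊤) (hn : 0 < n) (x : E) {c : ℝ} (h : ∀ i, |x i| ≤ c) :
    ‖x‖ ≤ c := by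
  subst hpt
  rw [PiLp.norm_eq_ciSup]
  have : Nonempty (Fin n) := ⟨⟨0, hn⟩⟩
  exact ciSup_le fun i => (Real.norm_eq_abs (x i)) ▸ h i

variable {n p} in
lemma abs_le_norm_top (hpt : p = ⊤) (x : E) (i : Fin n) : |x i| ≤ ‖x‖ := by
  subst hpt
  rw [PiLp.norm_eq_ciSup]
  have hb : BddAbove (Set.range fun i => ‖x i‖) := Set.Finite.bddAbove (Set.finite_range _)
  have := le_ciSup hb i
  rwa [Real.norm_eq_abs] at this

def IsExt (x : E) : Prop :=
  ‖x‖ = 1 ∧ ∀ a b : E, ‖a‖ ≤ 1 → ‖b‖ ≤ 1 → a + b = x + x → a = x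

variable {n p} in
lemma isExt_preserved (T : E ≃ₗᵢ[ℝ] E) {x : E} (h : IsExt n p x) : IsExt n p (T x) := by
  refine ⟨by rw [T.norm_map]; exact h.1, fun a b ha hb hab => ?_⟩
  have h2 : T.symm a + T.symm b = x + x := by
    have h3 := congrArg T.symm hab
    rwa [map_add, map_add, T.symm_apply_apply] at h3
  have h4 := h.2 (T.symm a) (T.symm b)
    (by rw [T.symm.norm_map]; exact ha) (by rw [T.symm.norm_map]; exact hb) h2
  have := congrArg T h4
  rwa [T.apply_symm_apply] at this

variable {n p} in
lemma isExt_iff (hpt : p = ⊤) (hn : 0 < n) (x : E) :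
    IsExt n p x ↔ ∀ i, x i = 1 ∨ x i = -1 := by
  constructor
  · intro h i
    have hle : |x i| ≤ 1 := h.1 ▸ abs_le_norm_top hpt x i
    by_contra hne
    push_neg at hne
    have habs : |x i| < 1 := by
      rcases lt_or_eq_of_le hle with h'|h'
      · exact h'
      · rcases (abs_eq (by norm_num : (0:ℝ) ≤ 1)).1 h' with h''|h''
        · exact absurd h'' hne.1
        · exact absurd h'' hne.2
    set δ := 1 - |x i| with hδ
    have hδpos : 0 < δ := by simp [hδ]; linarith
    have hbound : ∀ y : E, (∀ k, |y k| ≤ 1) → ‖y‖ ≤ 1 := fun y hy => norm_top_le hpt hn y hy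
    have hxk : ∀ k, |x k| ≤ 1 := fun k => h.1 ▸ abs_le_norm_top hpt x k
    have ha : ‖x + δ • ee n p i‖ ≤ 1 := by
      apply hbound
      intro k
      rw [PiLp.add_apply, PiLp.smul_apply]
      by_cases hk : k = i
      · subst hk
        have : ee n p k k = 1 := by simp [ee]
        rw [this, smul_eq_mul, mul_one]
        calc |x k + δ| ≤ |x k| + |δ| := abs_add_le _ _
        _ ≤ 1 := by rw [abs_of_pos hδpos]; simp [hδ]
      · have : ee n p i k = 0 := by simp [ee, Pi.single_apply, hk]
        rw [this, smul_eq_mul, mul_zero, add_zero]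
        exact hxk k
    have hb : ‖x - δ • ee n p i‖ ≤ 1 := by
      apply hbound
      intro k
      rw [PiLp.sub_apply, PiLp.smul_apply]
      by_cases hk : k = i
      · subst hk
        have : ee n p k k = 1 := by simp [ee]
        rw [this, smul_eq_mul, mul_one]
        calc |x k - δ| ≤ |x k| + |δ| := abs_sub _ _
        _ ≤ 1 := by rw [abs_of_pos hδpos]; simp [hδ]
      · have : ee n p i k = 0 := by simp [ee, Pi.single_apply, hk]
        rw [this, smul_eq_mul, mul_zero, sub_zero]
        exact hxk k
    have hab : (x + δ • ee n p i) + (x - δ • ee n p i) = x + x := by abel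
    have heq := h.2 _ _ ha hb hab
    have hcoord := congrArg (fun z : E => z i) heq
    rw [PiLp.add_apply, PiLp.smul_apply] at hcoord
    have h1 : ee n p i i = 1 := by simp [ee]
    rw [h1, smul_eq_mul, mul_one] at hcoord
    linarith
  · intro h
    have habs : ∀ i, |x i| = 1 := by
      intro i
      rcases h i with h'|h' <;> rw [h'] <;> norm_num
    constructor
    · apply le_antisymm
      · exact norm_top_le hpt hn x (fun i => (habs i).le)
      · have := abs_le_norm_top hpt x ⟨0, hn⟩
        rw [habs ⟨0, hn⟩] at this
        exact this
    · intro a b ha hb hab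
      apply ext_E
      intro k
      have hak : |a k| ≤ 1 := le_trans (abs_le_norm_top hpt a k) ha
      have hbk : |b k| ≤ 1 := le_trans (abs_le_norm_top hpt b k) hb
      have hck := congrArg (fun z : E => z k) hab
      rw [PiLp.add_apply, PiLp.add_apply] at hck
      rw [abs_le] at hak hbk
      rcases h k with h'|h' <;> rw [h'] at hck ⊢ <;> linarith [hak.1, hak.2, hbk.1, hbk.2]

variable {n p} in
lemma agree_on_sgn (T T' : E ≃ₗᵢ[ℝ] E)
    (h : ∀ v : Fin n → Bool, T (sgn n p v) = T' (sgn n p v)) : T = T' := by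
  classical
  have hee : ∀ i : Fin n, ee n p i ∈ Submodule.span ℝ (Set.range (sgn n p)) := by
    intro i
    have hrep : ee n p i =
        (2⁻¹ : ℝ) • (sgn n p (fun _ => true) - sgn n p (fun j => !(decide (j = i)))) := by
      apply ext_E
      intro k
      rw [PiLp.smul_apply, PiLp.sub_apply, sgn_apply, sgn_apply]
      by_cases hk : k = i
      · subst hk
        simp [ee]
        norm_num
      · simp [ee, Pi.single_apply, hk]
    rw [hrep]
    exact Submodule.smul_mem _ _ (Submodule.sub_mem _
      (Submodule.subset_span ⟨_, rfl⟩) (Submodule.subset_span ⟨_, rfl⟩))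
  have htop : Submodule.span ℝ (Set.range (sgn n p)) = ⊤ := by
    rw [eq_top_iff]
    rw [← (PiLp.basisFun p ℝ (Fin n)).span_eq]
    apply Submodule.span_le.2
    rintro y ⟨i, rfl⟩
    rw [PiLp.basisFun_apply]
    exact hee i
  have hlin : T.toLinearEquiv.toLinearMap = T'.toLinearEquiv.toLinearMap := by
    apply LinearMap.ext_on htop
    rintro y ⟨v, rfl⟩
    exact h v
  apply LinearIsometryEquiv.ext
  intro x
  exact DFunLike.congr_fun hlin x
variable {n p} in
lemma finite_isom (hn : 0 < n) (hp2 : p ≠ 2) : Finite (E ≃ₗᵢ[ℝ] E) := by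
  classical
  rcases eq_or_ne p ⊤ with hpt|hpt
  · -- p = ∞ : use sign vectors
    have key : ∀ (T : E ≃ₗᵢ[ℝ] E) (v : Fin n → Bool), ∃ w : Fin n → Bool,
        T (sgn n p v) = sgn n p w := by
      intro T v
      have hv : IsExt n p (sgn n p v) := by
        apply (isExt_iff hpt hn _).2
        intro i
        rw [sgn_apply]
        by_cases h : v i
        · rw [if_pos h]; left; rfl
        · rw [if_neg h]; right; rfl
      have he : IsExt n p (T (sgn n p v)) := isExt_preserved T hv
      have hcoord := (isExt_iff hpt hn _).1 he
      refine ⟨fun i => if T (sgn n p v) i = 1 then true else false, ext_E fun k => ?_⟩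
      rw [sgn_apply]
      rcases hcoord k with h|h
      · rw [h]; simp
      · rw [h]; norm_num
    choose f hf using key
    apply Finite.of_injective f
    intro T T' hTT'
    apply agree_on_sgn
    intro v
    rw [hf T v, hTT', ← hf T' v]
  · -- p finite
    have key := fun T : E ≃ₗᵢ[ℝ] E => signed_perm hpt hp2 T
    choose f hf using key
    apply Finite.of_injective f
    intro T T' h
    have heq : ∀ i, T (ee n p i) = T' (ee n p i) := by
      intro i
      rw [hf T i, h, ← hf T' i]
    have hlin : T.toLinearEquiv.toLinearMap = T'.toLinearEquiv.toLinearMap := by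
      apply Module.Basis.ext (PiLp.basisFun p ℝ (Fin n))
      intro i
      rw [PiLp.basisFun_apply]
      exact heq i
    apply LinearIsometryEquiv.ext
    intro x
    exact DFunLike.congr_fun hlin x

end Main

noncomputable def mkIso (n : ℕ) (p : ENNReal) [Fact (1 ≤ p)]
    (g : Equiv.Perm (PiLp p (fun _ : Fin n => ℝ)))
    (hg : ∀ x y : PiLp p (fun _ : Fin n => ℝ), dist (g x) (g y) = dist x y) :
    PiLp p (fun _ : Fin n => ℝ) ≃ᵢ PiLp p (fun _ : Fin n => ℝ) :=
  { toEquiv := g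
    isometry_toFun := Isometry.of_dist_eq hg }

noncomputable def linPart (n : ℕ) (p : ENNReal) [Fact (1 ≤ p)]
    (g : Equiv.Perm (PiLp p (fun _ : Fin n => ℝ)))
    (hg : ∀ x y : PiLp p (fun _ : Fin n => ℝ), dist (g x) (g y) = dist x y) :
    PiLp p (fun _ : Fin n => ℝ) ≃ₗᵢ[ℝ] PiLp p (fun _ : Fin n => ℝ) :=
  (mkIso n p g hg).toRealLinearIsometryEquiv

lemma linPart_apply (n : ℕ) (p : ENNReal) [Fact (1 ≤ p)]
    (g : Equiv.Perm (PiLp p (fun _ : Fin n => ℝ)))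
    (hg : ∀ x y : PiLp p (fun _ : Fin n => ℝ), dist (g x) (g y) = dist x y)
    (x : PiLp p (fun _ : Fin n => ℝ)) :
    linPart n p g hg x = g x - g 0 :=
  IsometryEquiv.toRealLinearIsometryEquiv_apply (mkIso n p g hg) x

/-- For `n ≥ 1` and `p ∈ [1,∞]` with `p ≠ 2`, the group of isometries of `ℝⁿ`
with the `ℓᵖ` norm is fixating: every subgroup of the permutation group of
`ℓᵖ(Fin n, ℝ)` consisting of isometries, each element of which has a fixed
point, has a common fixed point. -/
theorem isom_lp_norm_fixating
    (n : ℕ) (hn : 1 ≤ n) (p : ENNReal) [Fact (1 ≤ p)] (hp : p ≠ 2) :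
    ∀ G : Subgroup (Equiv.Perm (PiLp p (fun _ : Fin n => ℝ))),
      (∀ g ∈ G, ∀ x y : PiLp p (fun _ : Fin n => ℝ), dist (g x) (g y) = dist x y) →
      (∀ g ∈ G, ∃ x : PiLp p (fun _ : Fin n => ℝ), g x = x) →
      ∃ x : PiLp p (fun _ : Fin n => ℝ), ∀ g ∈ G, g x = x := by
  intro G hdist hfix
  classical
  let L : ↥G → (PiLp p (fun _ : Fin n => ℝ) ≃ₗᵢ[ℝ] PiLp p (fun _ : Fin n => ℝ)) := fun g =>
    linPart n p g.1 (hdist g.1 g.2)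
  have hL : ∀ (g : ↥G) (x : PiLp p (fun _ : Fin n => ℝ)), L g x = g.1 x - g.1 0 := fun g x =>
    linPart_apply n p _ _ x
  have hLmul : ∀ (g h : ↥G) (x : PiLp p (fun _ : Fin n => ℝ)), L (g*h) x = L g (L h x) := by
    intro g h x
    calc L (g*h) x = g.1 (h.1 x) - g.1 (h.1 0) := by rw [hL]; rfl
    _ = (g.1 (h.1 x) - g.1 0) - (g.1 (h.1 0) - g.1 0) := by abel
    _ = L g (h.1 x) - L g (h.1 0) := by rw [hL, hL]
    _ = L g (h.1 x - h.1 0) := (map_sub _ _ _).symm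
    _ = L g (L h x) := by rw [hL h]
  have hLinj : Function.Injective L := by
    intro g h hgh
    have hLk : ∀ x, L (h⁻¹ * g) x = x := by
      intro x
      have h1 : L (h⁻¹ * h) x = x := by
        rw [inv_mul_cancel, hL]
        simp
      calc L (h⁻¹ * g) x = L h⁻¹ (L g x) := hLmul _ _ _
      _ = L h⁻¹ (L h x) := by rw [hgh]
      _ = L (h⁻¹ * h) x := (hLmul _ _ _).symm
      _ = x := h1
    obtain ⟨y, hy⟩ := hfix _ (h⁻¹ * g).2
    have hk0 : (h⁻¹ * g).1 0 = 0 := by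
      have h1 := hL (h⁻¹ * g) y
      rw [hLk y, hy] at h1
      exact sub_eq_self.1 h1.symm
    have hk1 : h⁻¹ * g = 1 := by
      apply Subtype.ext
      apply Equiv.ext
      intro x
      have h1 := hL (h⁻¹ * g) x
      rw [hLk x, hk0, sub_zero] at h1
      simpa using h1.symm
    exact (inv_mul_eq_one.mp hk1).symm
  have hfinT : Finite (PiLp p (fun _ : Fin n => ℝ) ≃ₗᵢ[ℝ] PiLp p (fun _ : Fin n => ℝ)) :=
    finite_isom hn hp
  have hfinG : Finite ↥G := Finite.of_injective L hLinj
  have : Fintype ↥G := Fintype.ofFinite _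
  have hc : 0 < Fintype.card ↥G := Fintype.card_pos
  have hcR : ((Fintype.card ↥G : ℝ)) ≠ 0 := Nat.cast_ne_zero.2 hc.ne'
  refine ⟨((Fintype.card ↥G : ℝ))⁻¹ • ∑ h : ↥G, h.1 0, ?_⟩
  intro g hg
  have main : ∀ g' : ↥G, g'.1 (((Fintype.card ↥G : ℝ))⁻¹ • ∑ h : ↥G, h.1 0)
      = ((Fintype.card ↥G : ℝ))⁻¹ • ∑ h : ↥G, h.1 0 := by
    intro g'
    have hre : ∑ h : ↥G, (g' * h).1 0 = ∑ h : ↥G, h.1 0 := by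
      apply Fintype.sum_equiv (Equiv.mulLeft g')
      intro h
      simp
    have hsum : ∀ h : ↥G, L g' (h.1 0) = (g' * h).1 0 - g'.1 0 := by
      intro h
      rw [hL]
      rfl
    have hLS : L g' (∑ h : ↥G, h.1 0)
        = (∑ h : ↥G, h.1 0) - (Fintype.card ↥G : ℝ) • g'.1 0 := by
      rw [map_sum, Finset.sum_congr rfl (fun h _ => hsum h), Finset.sum_sub_distrib,
        Finset.sum_const, Finset.card_univ, hre, ← Nat.cast_smul_eq_nsmul ℝ]
    have h3 : g'.1 (((Fintype.card ↥G : ℝ))⁻¹ • ∑ h : ↥G, h.1 0)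
        = L g' (((Fintype.card ↥G : ℝ))⁻¹ • ∑ h : ↥G, h.1 0) + g'.1 0 := by
      rw [hL]
      abel
    rw [h3, map_smul, hLS, smul_sub, smul_smul, inv_mul_cancel₀ hcR, one_smul]
    abel
  exact main ⟨g, hg⟩
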